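/- Let a0, c, mu0, mu1 > 0, b ∈ ℝ, and σ > a0/(2c). Set E = 3·a0²·mu1² − 2·a0·b·mu1 − 4·a0·mu0 − b² + 4·a0, assume E·(a0 − c·σ) > 0, and define B = (a0·mu1 − b)/(2·a0). Assume σ satisfies the compatibility condition (σ + 3·a0·B² + 2·b·B − mu0)/a0 = (σ − 1)/(c·σ). Define ω = −(a0·mu1² − b·mu1 − mu0 + σ)·mu1, λ = √(E/(16·a0·(a0 − c·σ))), and d2 = 3·√(2·c·σ − a0)·E/(8·√a0·(a0 − c·σ)). Then the synchronized pair f(ξ) = d2·sech²(λ·ξ) and g(ξ) = √(a0/(2·c·σ − a0))·f(ξ) satisfies the Schrödinger KdV–BBM associated ODE system with parameters a0, c, mu0, mu1, b, wave speed σ, and phase shifts B, ω. -/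

import Mathlib

set_option maxHeartbeats 1000000

theorem stmt_13
    (a0 c mu0 mu1 b : ℝ)
    (ha0 : 0 < a0) (hc : 0 < c) (hmu0 : 0 < mu0) (hmu1 : 0 < mu1)
    (σ : ℝ) (hσ : σ > a0/(2*c))
    (E : ℝ) (hE : E = 3*a0^2*mu1^2 - 2*a0*b*mu1 - 4*a0*mu0 - b^2 + 4*a0) (hEsgn : E * (a0 - c*σ) > 0)
    (B ω lam d2 : ℝ)
    (h_B : B = (a0*mu1 - b)/(2*a0))
    (h_ω : ω = -(a0*mu1^2 - b*mu1 - mu0 + σ)*mu1)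
    (h_lam : lam = Real.sqrt (E/(16*a0*(a0 - c*σ))))
    (h_d2 : d2 = 3*Real.sqrt (2*c*σ - a0)*E/(8*Real.sqrt a0*(a0 - c*σ)))
    (hcompat : (σ + 3*a0*B^2 + 2*b*B - mu0)/a0 = (σ - 1)/(c*σ))
    (f g : ℝ → ℝ)
    (hfdef : ∀ ξ : ℝ, f ξ = d2 * (1/Real.cosh (lam*ξ))^2)
    (hgdef : ∀ ξ : ℝ, g ξ = Real.sqrt (a0/(2*c*σ - a0)) * f ξ) :
    ∀ ξ : ℝ,
      (deriv f ξ * g ξ + f ξ * deriv g ξ + a0 * iteratedDeriv 3 f ξ + (mu0 - σ - 3*a0*B^2 - 2*b*B) * deriv f ξ = 0) ∧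
      ((B + mu1) * f ξ * g ξ + (3*a0*B + b) * iteratedDeriv 2 f ξ + (ω + B*mu0 - B*σ - a0*B^3 - b*B^2) * f ξ = 0) ∧
      (f ξ * deriv f ξ + g ξ * deriv g ξ + (c*σ) * iteratedDeriv 3 g ξ + (1 - σ) * deriv g ξ = 0) := by
  have hD : 0 < 2*c*σ - a0 := by
    have := (div_lt_iff₀ (by positivity : (0:ℝ) < 2*c)).mp hσ
    nlinarith
  have haσ : a0 - c*σ ≠ 0 := by
    intro h
    rw [h, mul_zero] at hEsgn; exact lt_irrefl 0 hEsgn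
  have hEne : E ≠ 0 := by
    intro h; rw [h, zero_mul] at hEsgn; exact lt_irrefl 0 hEsgn
  have ha0' : a0 ≠ 0 := ha0.ne'
  have hcσ : c*σ ≠ 0 := by
    intro h
    have : (0:ℝ) < 2*(c*σ) - a0 := by linarith [hD]
    rw [h] at this; linarith
  have hlam2 : lam^2 = E/(16*a0*(a0 - c*σ)) := by
    rw [h_lam, Real.sq_sqrt]
    have key : E/(16*a0*(a0 - c*σ)) = (E*(a0 - c*σ))/(16*a0*(a0 - c*σ)^2) := by
      field_simp
    rw [key]
    have h2 : (0:ℝ) < 16*a0*(a0 - c*σ)^2 := by positivity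
    positivity
  set K : ℝ := Real.sqrt (a0/(2*c*σ - a0)) with hK
  have hKpos : 0 < K := Real.sqrt_pos.mpr (by positivity)
  have hK2 : K^2 = a0/(2*c*σ - a0) := Real.sq_sqrt (by positivity)
  have hsa0 : Real.sqrt a0 ≠ 0 := by positivity
  have hsD : Real.sqrt (2*c*σ - a0) ≠ 0 := by positivity
  have hKd2 : K*d2 = 6*a0*lam^2 := by
    have l1 : K = Real.sqrt a0 / Real.sqrt (2*c*σ - a0) := by rw [hK, Real.sqrt_div ha0.le]
    rw [l1, h_d2, hlam2]
    field_simp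
    ring
  have hcompat' : (σ + 3*a0*B^2 + 2*b*B - mu0)*(c*σ) = (σ - 1)*a0 := by
    rw [div_eq_div_iff ha0' hcσ] at hcompat
    linarith [hcompat]
  have hlam2' : lam^2 * (16*a0*(a0 - c*σ)) = E := by
    rw [hlam2]; field_simp
  have hN : (σ + 3*a0*B^2 + 2*b*B - mu0)*(4*a0) = (σ - 1)*(4*a0) + E := by
    rw [h_B, hE]; field_simp; ring
  have h1 : (σ + 3*a0*B^2 + 2*b*B - mu0)*(4*(a0 - c*σ)) = E := by
    linear_combination hN - 4*hcompat'
  have hM : 4*a0*lam^2 + (mu0 - σ - 3*a0*B^2 - 2*b*B) = 0 := by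
    have h5 : (a0 - c*σ)*((4*a0*lam^2 + (mu0 - σ - 3*a0*B^2 - 2*b*B))*4) = 0 := by
      linear_combination hlam2' - h1
    rcases mul_eq_zero.mp h5 with h | h
    · exact absurd h haσ
    · linarith
  have hCc : 4*(c*σ)*lam^2 + (1 - σ) = 0 := by
    have h6 : a0*(4*(c*σ)*lam^2 + (1 - σ)) = 0 := by
      linear_combination (c*σ)*hM + hcompat'
    rcases mul_eq_zero.mp h6 with h | h
    · exact absurd h ha0'
    · exact h
  have hDd : (1 + K^2)*d2 = 12*(c*σ)*K*lam^2 := by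
    have hmul : K*((1 + K^2)*d2) = K*(12*(c*σ)*K*lam^2) := by
      have l1 : K*((1+K^2)*d2) = (1+K^2)*(K*d2) := by ring
      rw [l1, hKd2]
      have l2 : K*(12*(c*σ)*K*lam^2) = 12*(c*σ)*K^2*lam^2 := by ring
      rw [l2, hK2]
      field_simp
      ring
    exact mul_left_cancel₀ hKpos.ne' hmul
  have h3 : 3*a0*B + b = a0*(B + mu1) := by rw [h_B]; field_simp; ring
  have hPc : ω + B*mu0 - B*σ - a0*B^3 - b*B^2 = -4*lam^2*(3*a0*B + b) := by
    have hid : ω + B*mu0 - B*σ - a0*B^3 - b*B^2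
        = -(σ + 3*a0*B^2 + 2*b*B - mu0)*(B + mu1) := by
      rw [h_ω, h_B]; field_simp; ring
    rw [hid, h3]
    linear_combination (B+mu1)*hM
  -- derivative machinery
  have hf : f = fun ξ => d2 / (Real.cosh (lam*ξ))^2 := by
    funext ξ; rw [hfdef]; ring
  have hg : g = fun ξ => K * f ξ := by
    funext ξ; rw [hgdef]
  have hCne : ∀ ξ : ℝ, Real.cosh (lam*ξ) ≠ 0 := fun ξ => (Real.cosh_pos _).ne'
  have hch : ∀ ξ : ℝ, HasDerivAt (fun x : ℝ => Real.cosh (lam*x)) (Real.sinh (lam*ξ) * lam) ξ :=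
    fun ξ => by simpa using (HasDerivAt.cosh ((hasDerivAt_id ξ).const_mul lam))
  have hsh : ∀ ξ : ℝ, HasDerivAt (fun x : ℝ => Real.sinh (lam*x)) (Real.cosh (lam*ξ) * lam) ξ :=
    fun ξ => by simpa using (HasDerivAt.sinh ((hasDerivAt_id ξ).const_mul lam))
  have hfd : ∀ ξ : ℝ, HasDerivAt f
      ((-2*lam*d2) * (Real.sinh (lam*ξ) / (Real.cosh (lam*ξ))^3)) ξ := by
    intro ξ
    have h := (hasDerivAt_const ξ d2).div ((hch ξ).pow 2) (pow_ne_zero 2 (hCne ξ))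
    rw [hf]
    refine h.congr_deriv ?_
    have := hCne ξ
    simp only [Pi.pow_apply]
    field_simp
    ring
  have hfd2 : ∀ ξ : ℝ, HasDerivAt
      (fun ξ => (-2*lam*d2) * (Real.sinh (lam*ξ) / (Real.cosh (lam*ξ))^3))
      ((-2*lam^2*d2) / (Real.cosh (lam*ξ))^2
        + (6*lam^2*d2) * ((Real.sinh (lam*ξ))^2 / (Real.cosh (lam*ξ))^4)) ξ := by
    intro ξ
    have h := (((hsh ξ).div ((hch ξ).pow 3) (pow_ne_zero 3 (hCne ξ))).const_mul (-2*lam*d2))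
    refine h.congr_deriv ?_
    have := hCne ξ
    simp only [Pi.pow_apply]
    field_simp
    ring
  have hfd3 : ∀ ξ : ℝ, HasDerivAt
      (fun ξ => (-2*lam^2*d2) / (Real.cosh (lam*ξ))^2
        + (6*lam^2*d2) * ((Real.sinh (lam*ξ))^2 / (Real.cosh (lam*ξ))^4))
      ((-8*lam^3*d2) * (Real.sinh (lam*ξ) / (Real.cosh (lam*ξ))^3)
        + (24*lam^3*d2) * (Real.sinh (lam*ξ) / (Real.cosh (lam*ξ))^5)) ξ := by
    intro ξ
    have h1 := (hasDerivAt_const ξ (-2*lam^2*d2)).div ((hch ξ).pow 2) (pow_ne_zero 2 (hCne ξ))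
    have h2 := ((((hsh ξ).pow 2).div ((hch ξ).pow 4) (pow_ne_zero 4 (hCne ξ))).const_mul (6*lam^2*d2))
    have h := h1.add h2
    refine h.congr_deriv ?_
    have hne := hCne ξ
    have hc2 := Real.cosh_sq (lam*ξ)
    have hs : Real.sinh (lam*ξ)^2 = Real.cosh (lam*ξ)^2 - 1 := by linarith [hc2]
    simp only [Pi.pow_apply, hs]
    field_simp
    ring
  have hdf : deriv f = fun ξ => (-2*lam*d2) * (Real.sinh (lam*ξ) / (Real.cosh (lam*ξ))^3) :=
    funext fun ξ => (hfd ξ).deriv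
  have hd2f : iteratedDeriv 2 f = fun ξ => (-2*lam^2*d2) / (Real.cosh (lam*ξ))^2
      + (6*lam^2*d2) * ((Real.sinh (lam*ξ))^2 / (Real.cosh (lam*ξ))^4) := by
    rw [show (2:ℕ) = 1+1 from rfl, iteratedDeriv_succ, iteratedDeriv_one, hdf]
    exact funext fun ξ => (hfd2 ξ).deriv
  have hd3f : iteratedDeriv 3 f = fun ξ => (-8*lam^3*d2) * (Real.sinh (lam*ξ) / (Real.cosh (lam*ξ))^3)
      + (24*lam^3*d2) * (Real.sinh (lam*ξ) / (Real.cosh (lam*ξ))^5) := by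
    rw [show (3:ℕ) = 2+1 from rfl, iteratedDeriv_succ, hd2f]
    exact funext fun ξ => (hfd3 ξ).deriv
  have hdg : deriv g = fun ξ => K * ((-2*lam*d2) * (Real.sinh (lam*ξ) / (Real.cosh (lam*ξ))^3)) := by
    rw [hg]
    exact funext fun ξ => (((hfd ξ).const_mul K)).deriv
  have hd3g : iteratedDeriv 3 g = fun ξ => K * ((-8*lam^3*d2) * (Real.sinh (lam*ξ) / (Real.cosh (lam*ξ))^3)
      + (24*lam^3*d2) * (Real.sinh (lam*ξ) / (Real.cosh (lam*ξ))^5)) := by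
    have h1 : deriv g = fun ξ => K * ((-2*lam*d2) * (Real.sinh (lam*ξ) / (Real.cosh (lam*ξ))^3)) := hdg
    rw [show (3:ℕ) = 1+1+1 from rfl, iteratedDeriv_succ, iteratedDeriv_succ, iteratedDeriv_one, h1]
    have h2 : deriv (fun ξ => K * ((-2*lam*d2) * (Real.sinh (lam*ξ) / (Real.cosh (lam*ξ))^3)))
        = fun ξ => K * ((-2*lam^2*d2) / (Real.cosh (lam*ξ))^2
          + (6*lam^2*d2) * ((Real.sinh (lam*ξ))^2 / (Real.cosh (lam*ξ))^4)) :=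
      funext fun ξ => ((hfd2 ξ).const_mul K).deriv
    rw [h2]
    exact funext fun ξ => ((hfd3 ξ).const_mul K).deriv
  intro ξ
  have hCne' : Real.cosh (lam*ξ) ≠ 0 := hCne ξ
  have hc2 : Real.cosh (lam*ξ)^2 = Real.sinh (lam*ξ)^2 + 1 := Real.cosh_sq (lam*ξ)
  have hfx : f ξ = d2 / Real.cosh (lam*ξ)^2 := by rw [hf]
  have hgx : g ξ = K * (d2 / Real.cosh (lam*ξ)^2) := by rw [hgdef ξ, hfx]
  refine ⟨?_, ?_, ?_⟩
  · rw [hdf, hd3f, hdg]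
    simp only
    rw [hfx, hgx]
    field_simp
    linear_combination (lam*d2*Real.sinh (lam*ξ)) *
      ((-2*(Real.cosh (lam*ξ))^2)*hM + (-4)*hKd2)
  · rw [hd2f]
    simp only
    rw [hfx, hgx]
    field_simp
    linear_combination d2 *
      ((B+mu1)*hKd2 + (Real.cosh (lam*ξ))^2*hPc + (-6*lam^2*(3*a0*B+b))*hc2 + (-6*lam^2)*h3)
  · rw [hdf, hd3g, hdg]
    simp only
    rw [hfx, hgx]
    field_simp
    linear_combination (d2*lam*Real.sinh (lam*ξ)) *
      ((-2*(Real.cosh (lam*ξ))^2*K)*hCc + (-2)*hDd)
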